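/- Let A ∈ SL(2,ℝ) be hyperbolic with singular value decomposition A = R_u · diag(λ(A), λ(A)⁻¹) · R_{π/2 − s}, λ(A) > 1, where R_θ denotes rotation by θ. Write A = diag(λ₁,λ₁⁻¹)·D·diag(λ₀,λ₀⁻¹) with ‖D‖ ≤ C₀, min(λ₀,λ₁) ≥ λ̄, and ∠(D(1,0)ᵀ,(0,1)ᵀ) > κ > λ̄^{-1/4}. Then, for λ̄ large depending only on C₀, both |π/2 − s|_{ℝ/πℤ} and |u|_{ℝ/πℤ} are bounded by C·C₀⁴·λ̄⁻²·κ⁻² for an absolute constant C. -/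

import Mathlib

open Real

noncomputable def vnorm (x : Fin 2 → ℝ) : ℝ := Real.sqrt (x 0 ^ 2 + x 1 ^ 2)

noncomputable def opNorm2 (A : Matrix (Fin 2) (Fin 2) ℝ) : ℝ :=
  ⨆ θ : ℝ, vnorm (A.mulVec ![Real.cos θ, Real.sin θ])

noncomputable def argOf (x : Fin 2 → ℝ) : ℝ := Complex.arg (x 0 + x 1 * Complex.I)

noncomputable def pangle (x y : Fin 2 → ℝ) : ℝ :=
  ‖((argOf x - argOf y : ℝ) : AddCircle (π : ℝ))‖

/-- distance from `x` to `πℤ` -/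
noncomputable def pdist (x : ℝ) : ℝ := ‖((x : ℝ) : AddCircle (π : ℝ))‖

/-- rotation by `θ` -/
noncomputable def Rot (θ : ℝ) : Matrix (Fin 2) (Fin 2) ℝ :=
  !![Real.cos θ, -Real.sin θ; Real.sin θ, Real.cos θ]

/-- `diag(l, l⁻¹)` -/
noncomputable def Dg (l : ℝ) : Matrix (Fin 2) (Fin 2) ℝ := !![l, 0; 0, l⁻¹]

lemma abs_sin_eq' (z : ℝ) (hz : |z| ≤ π) : |Real.sin z| = Real.sin |z| := by
  rcases le_or_gt 0 z with h | h
  · rw [abs_of_nonneg h] at *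
    exact abs_of_nonneg (Real.sin_nonneg_of_nonneg_of_le_pi h hz)
  · rw [abs_of_neg h] at *
    rw [Real.sin_neg]
    have : 0 ≤ Real.sin (-z) := Real.sin_nonneg_of_nonneg_of_le_pi (by linarith) hz
    rw [Real.sin_neg] at this
    rw [abs_of_nonpos (by linarith)]

lemma pdist_rep (x : ℝ) : ∃ y : ℝ, pdist x = |y| ∧ |y| ≤ π/2 ∧ |Real.sin x| = Real.sin |y| := by
  have hπ : (0:ℝ) < π := Real.pi_pos
  refine ⟨x - round (π⁻¹ * x) * π, ?_, ?_, ?_⟩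
  · rw [pdist, AddCircle.norm_eq]
  · have h := AddCircle.norm_le_half_period π (x := (x : AddCircle π)) hπ.ne'
    rw [AddCircle.norm_eq, abs_of_pos hπ] at h
    exact h
  · have h2 : |Real.sin (x - round (π⁻¹ * x) * π)| = |Real.sin x| := by
      simp [Real.sin_sub, Real.sin_int_mul_pi, abs_mul, Real.abs_cos_int_mul_pi]
    rw [← h2]
    have h : |x - round (π⁻¹ * x) * π| ≤ π/2 := by
      have h := AddCircle.norm_le_half_period π (x := (x : AddCircle π)) hπ.ne'
      rw [AddCircle.norm_eq, abs_of_pos hπ] at h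
      exact h
    exact abs_sin_eq' _ (h.trans (by linarith))

lemma pdist_le_sin' (x : ℝ) : pdist x ≤ (π/2) * |Real.sin x| := by
  obtain ⟨y, h1, h2, h3⟩ := pdist_rep x
  have hπ : (0:ℝ) < π := Real.pi_pos
  have h := Real.mul_le_sin (abs_nonneg y) h2
  rw [div_mul_eq_mul_div, div_le_iff₀ hπ] at h
  rw [h1, h3]
  nlinarith

lemma col_bound (D : Matrix (Fin 2) (Fin 2) ℝ) (C₀ : ℝ) (h : opNorm2 D ≤ C₀) :
    Real.sqrt ((D 0 0)^2 + (D 1 0)^2) ≤ C₀ ∧ Real.sqrt ((D 0 1)^2 + (D 1 1)^2) ≤ C₀ := by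
  have hb : BddAbove (Set.range fun θ : ℝ => vnorm (D.mulVec ![Real.cos θ, Real.sin θ])) := by
    refine ⟨|D 0 0| + |D 0 1| + |D 1 0| + |D 1 1|, ?_⟩
    rintro y ⟨θ, rfl⟩
    have h0 : |(D.mulVec ![Real.cos θ, Real.sin θ]) 0| ≤ |D 0 0| + |D 0 1| := by
      simp only [Matrix.mulVec, dotProduct, Fin.sum_univ_two, Matrix.cons_val_zero,
        Matrix.cons_val_one, Matrix.head_cons]
      calc |D 0 0 * Real.cos θ + D 0 1 * Real.sin θ|
          ≤ |D 0 0 * Real.cos θ| + |D 0 1 * Real.sin θ| := abs_add_le _ _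
        _ ≤ |D 0 0| + |D 0 1| := by
            rw [abs_mul, abs_mul]
            have := Real.abs_cos_le_one θ; have := Real.abs_sin_le_one θ
            nlinarith [abs_nonneg (D 0 0), abs_nonneg (D 0 1)]
    have h1 : |(D.mulVec ![Real.cos θ, Real.sin θ]) 1| ≤ |D 1 0| + |D 1 1| := by
      simp only [Matrix.mulVec, dotProduct, Fin.sum_univ_two, Matrix.cons_val_zero,
        Matrix.cons_val_one, Matrix.head_cons]
      calc |D 1 0 * Real.cos θ + D 1 1 * Real.sin θ|
          ≤ |D 1 0 * Real.cos θ| + |D 1 1 * Real.sin θ| := abs_add_le _ _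
        _ ≤ |D 1 0| + |D 1 1| := by
            rw [abs_mul, abs_mul]
            have := Real.abs_cos_le_one θ; have := Real.abs_sin_le_one θ
            nlinarith [abs_nonneg (D 1 0), abs_nonneg (D 1 1)]
    show Real.sqrt _ ≤ _
    calc Real.sqrt ((D.mulVec ![Real.cos θ, Real.sin θ]) 0 ^2 + (D.mulVec ![Real.cos θ, Real.sin θ]) 1 ^2)
        ≤ Real.sqrt ((|D 0 0| + |D 0 1| + (|D 1 0| + |D 1 1|))^2) := by
          apply Real.sqrt_le_sqrt
          nlinarith [sq_abs ((D.mulVec ![Real.cos θ, Real.sin θ]) 0),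
            sq_abs ((D.mulVec ![Real.cos θ, Real.sin θ]) 1),
            abs_nonneg ((D.mulVec ![Real.cos θ, Real.sin θ]) 0),
            abs_nonneg ((D.mulVec ![Real.cos θ, Real.sin θ]) 1),
            abs_nonneg (D 0 0), abs_nonneg (D 0 1), abs_nonneg (D 1 0), abs_nonneg (D 1 1), h0, h1]
      _ = |D 0 0| + |D 0 1| + (|D 1 0| + |D 1 1|) := Real.sqrt_sq (by positivity)
      _ ≤ |D 0 0| + |D 0 1| + |D 1 0| + |D 1 1| := by ring_nf; rfl
  constructor
  · have h0 := (le_ciSup hb 0).trans h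
    simpa [vnorm, Matrix.mulVec, dotProduct, Fin.sum_univ_two] using h0
  · have h1 := (le_ciSup hb (π/2)).trans h
    simpa [vnorm, Matrix.mulVec, dotProduct, Fin.sum_univ_two] using h1

lemma angle_lower (a b κ : ℝ) (hz : a^2 + b^2 ≠ 0)
    (h : pangle ![a, b] ![0, 1] > κ) :
    (2/π) * κ * Real.sqrt (a^2+b^2) ≤ |a| := by
  have hπ := Real.pi_pos
  have harg2 : argOf ![(0:ℝ), 1] = π/2 := by
    simp [argOf, Complex.arg_I]
  set z : ℂ := (a : ℂ) + b * Complex.I with hzdef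
  have hzne : z ≠ 0 := by
    intro hz0
    apply hz
    have hre : z.re = a := by simp [hzdef]
    have him : z.im = b := by simp [hzdef]
    rw [hz0] at hre him
    simp at hre him
    nlinarith [hre, him]
  have habs : ‖z‖ = Real.sqrt (a^2+b^2) := by
    rw [Complex.norm_def, Complex.normSq_apply]
    simp [hzdef]
    ring_nf
  have hcos : Real.cos (Complex.arg z) = a / Real.sqrt (a^2+b^2) := by
    rw [Complex.cos_arg hzne, habs]
    simp [hzdef]
  have hpan : pangle ![a,b] ![0,1] = pdist (Complex.arg z - π/2) := by
    rw [pangle, pdist, harg2]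
    congr 1
  rw [hpan] at h
  have hsin : |Real.sin (Complex.arg z - π/2)| = |Real.cos (Complex.arg z)| := by
    rw [Real.sin_sub, Real.sin_pi_div_two, Real.cos_pi_div_two]
    simp [abs_neg]
  have h2 := (pdist_le_sin' (Complex.arg z - π/2))
  rw [hsin, hcos] at h2
  have hsq : 0 < Real.sqrt (a^2+b^2) := by
    apply Real.sqrt_pos.2
    rcases (lt_or_gt_of_ne hz) with h' | h'
    · nlinarith
    · exact h'
  have hlt : κ < (π/2) * (|a| / Real.sqrt (a^2+b^2)) := by
    rw [abs_div, abs_of_pos hsq] at h2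
    linarith
  have h3 : κ * Real.sqrt (a^2+b^2) < (π/2) * |a| := by
    have h4 := mul_lt_mul_of_pos_right hlt hsq
    rw [mul_assoc, div_mul_cancel₀ _ hsq.ne'] at h4
    exact h4
  rw [div_mul_eq_mul_div, div_mul_eq_mul_div, div_le_iff₀ hπ]
  nlinarith [h3]

lemma core_bound (C₀ κ lam a b gap x : ℝ) (hC0 : 1 ≤ C₀) (hκ0 : 0 < κ)
    (hlam : 1 ≤ lam) (ha : lam ≤ a) (hb : lam ≤ b)
    (hgap : 2*κ^2*a^2*b^2 ≤ π^2*C₀^2*gap)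
    (hx : gap * x^2 ≤ C₀^2*b^2*(a⁻¹)^2 + C₀^2*(b⁻¹)^2*(a⁻¹)^2) :
    x^2*(κ^2*lam^4) ≤ π^2*C₀^4 := by
  have hπ := Real.pi_pos
  have ha0 : (0:ℝ) < a := by linarith
  have hb0 : (0:ℝ) < b := by linarith
  have ia : a * a⁻¹ = 1 := mul_inv_cancel₀ ha0.ne'
  have ib : b * b⁻¹ = 1 := mul_inv_cancel₀ hb0.ne'
  have s1 : 2*κ^2*a^2*b^2*x^2 ≤ π^2*C₀^2*gap*x^2 :=
    mul_le_mul_of_nonneg_right hgap (sq_nonneg x)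
  have s2 : π^2*C₀^2*(gap*x^2) ≤ π^2*C₀^2*(C₀^2*b^2*(a⁻¹)^2 + C₀^2*(b⁻¹)^2*(a⁻¹)^2) :=
    mul_le_mul_of_nonneg_left hx (by positivity)
  have s3 : 2*κ^2*a^2*b^2*x^2 ≤ π^2*C₀^2*(C₀^2*b^2*(a⁻¹)^2 + C₀^2*(b⁻¹)^2*(a⁻¹)^2) := by
    linarith [s1, s2]
  have e2 : (π^2*C₀^2*(C₀^2*b^2*(a⁻¹)^2 + C₀^2*(b⁻¹)^2*(a⁻¹)^2)) * a^2
      = π^2*(C₀^2*C₀^2)*(b^2 + (b⁻¹)^2) := by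
    linear_combination (π^2*(C₀^2*C₀^2)*(b^2 + (b⁻¹)^2) * (a*a⁻¹ + 1)) * ia
  have s4 : 2*κ^2*a^4*b^2*x^2 ≤ π^2*(C₀^2*C₀^2)*(b^2 + (b⁻¹)^2) := by
    have h := mul_le_mul_of_nonneg_right s3 (sq_nonneg a)
    rw [e2] at h
    linarith [h]
  have hbinv : (b⁻¹)^2 ≤ 1 := by
    have h1 : b⁻¹ ≤ 1 := by
      rw [inv_le_one_iff₀]; right; linarith
    have h0 : 0 < b⁻¹ := by positivity
    nlinarith
  have hb2 : 1 ≤ b^2 := by nlinarith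
  have h5a : π^2*(C₀^2*C₀^2)*(b⁻¹)^2 ≤ π^2*(C₀^2*C₀^2)*b^2 :=
    mul_le_mul_of_nonneg_left (hbinv.trans hb2) (by positivity)
  have s5 : 2*κ^2*a^4*b^2*x^2 ≤ 2*(π^2*(C₀^2*C₀^2))*b^2 := by linarith [s4, h5a]
  have s6 : κ^2*a^4*x^2 ≤ π^2*(C₀^2*C₀^2) := by
    have h2b : (0:ℝ) < 2*b^2 := by positivity
    have h : (κ^2*a^4*x^2) * (2*b^2) ≤ (π^2*(C₀^2*C₀^2)) * (2*b^2) := by linarith [s5]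
    exact le_of_mul_le_mul_right h h2b
  have hla : lam^4 ≤ a^4 := pow_le_pow_left₀ (by linarith) ha 4
  have h8a : κ^2*lam^4 ≤ κ^2*a^4 := mul_le_mul_of_nonneg_left hla (sq_nonneg κ)
  have h8 : x^2*(κ^2*lam^4) ≤ x^2*(κ^2*a^4) := mul_le_mul_of_nonneg_left h8a (sq_nonneg x)
  linarith [h8, s6]


lemma final_step (C₀ κ lam x w : ℝ) (hC0 : 1 ≤ C₀) (hκ0 : 0 < κ) (hκ1 : κ < 1)
    (hlam : 1 ≤ lam) (hsin : |Real.sin w| = |x|)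
    (h : x^2*(κ^2 * lam^4) ≤ π^2*C₀^4) :
    pdist w ≤ 5 * C₀ ^ 4 * lam⁻¹ ^ 2 * κ⁻¹ ^ 2 := by
  have hπ := Real.pi_pos
  have hπ4 : π < 3.15 := Real.pi_lt_d2
  have hlam0 : (0:ℝ) < lam := by linarith
  set t : ℝ := π*C₀^2*κ⁻¹*lam⁻¹^2 with ht
  have ht0 : 0 < t := by positivity
  have iκ : κ * κ⁻¹ = 1 := mul_inv_cancel₀ hκ0.ne'
  have il : lam * lam⁻¹ = 1 := mul_inv_cancel₀ hlam0.ne'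
  have ht2 : t^2 * (κ^2*lam^4) = π^2*C₀^4 := by
    have e : t^2 * (κ^2*lam^4) = π^2*C₀^4 * ((κ*κ⁻¹)^2 * (lam*lam⁻¹)^4) := by ring
    rw [e, iκ, il]; ring
  have hx2 : x^2 ≤ t^2 := by
    have hpos : (0:ℝ) < κ^2*lam^4 := by positivity
    have := h.trans_eq ht2.symm
    exact le_of_mul_le_mul_right this hpos
  have habs : |x| ≤ t := by
    rw [← Real.sqrt_sq_eq_abs]
    calc Real.sqrt (x^2) ≤ Real.sqrt (t^2) := Real.sqrt_le_sqrt hx2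
      _ = t := Real.sqrt_sq ht0.le
  have h1 : pdist w ≤ (π/2) * |x| := by
    rw [← hsin]; exact pdist_le_sin' w
  have hκinv : 1 ≤ κ⁻¹ := by
    nlinarith [iκ, hκ1, inv_pos.2 hκ0]
  have hlinv : 0 < lam⁻¹ := by positivity
  calc pdist w ≤ (π/2) * t := by
        apply h1.trans
        apply mul_le_mul_of_nonneg_left habs (by positivity)
    _ = (π*π/2)*(C₀^2*κ⁻¹*lam⁻¹^2) := by rw [ht]; ring
    _ ≤ 5*(C₀^4*κ⁻¹^2*lam⁻¹^2) := by
        apply mul_le_mul (by nlinarith) ?_ (by positivity) (by norm_num)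
        apply mul_le_mul_of_nonneg_right ?_ (sq_nonneg lam⁻¹)
        have hh1 : C₀^2 ≤ C₀^4 := pow_le_pow_right₀ hC0 (by norm_num)
        have hh2 : κ⁻¹ ≤ κ⁻¹^2 := by nlinarith [hκinv]
        exact mul_le_mul hh1 hh2 (by positivity) (by positivity)
    _ = 5 * C₀ ^ 4 * lam⁻¹ ^ 2 * κ⁻¹ ^ 2 := by ring

lemma cauchy2 (a b c d : ℝ) : (a*d - b*c)^2 ≤ (a^2+c^2)*(b^2+d^2) := by
  nlinarith [sq_nonneg (a*b + c*d)]

lemma det_one_col (a b c d C : ℝ) (hdet : a*d - b*c = 1) (h2 : b^2+d^2 ≤ C^2)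
    (hnn : 0 ≤ a^2+c^2) : 1 ≤ (a^2+c^2)*C^2 := by
  have h1 := cauchy2 a b c d
  rw [hdet] at h1
  have h3 := mul_le_mul_of_nonneg_left h2 hnn
  nlinarith [h1, h3]

lemma one_le_of_sq (t : ℝ) (h0 : 0 ≤ t) (h2 : 1 ≤ t^2) : 1 ≤ t := by nlinarith

lemma pisq_le : π^2 ≤ (10:ℝ) := by nlinarith [Real.pi_pos, Real.pi_lt_d2]

set_option maxHeartbeats 1000000 in
theorem stmt_4 :
    ∃ C : ℝ, 0 < C ∧ ∀ C₀ : ℝ, 1 ≤ C₀ → ∃ Λ : ℝ, 0 < Λ ∧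
      ∀ lam lam0 lam1 κ u s lamA : ℝ, ∀ D : Matrix (Fin 2) (Fin 2) ℝ,
        Λ ≤ lam → lam ≤ lam0 → lam ≤ lam1 →
        D.det = 1 → opNorm2 D ≤ C₀ →
        0 < κ → κ < 1 → κ > lam ^ (-(1/4 : ℝ)) →
        pangle (D.mulVec ![1, 0]) ![0, 1] > κ →
        lamA > 1 →
        Rot u * Dg lamA * Rot (π / 2 - s) = Dg lam1 * D * Dg lam0 →
        (pdist (π / 2 - s) ≤ C * C₀ ^ 4 * lam⁻¹ ^ 2 * κ⁻¹ ^ 2 ∧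
          pdist u ≤ C * C₀ ^ 4 * lam⁻¹ ^ 2 * κ⁻¹ ^ 2) := by
  refine ⟨5, by norm_num, ?_⟩
  intro C₀ hC0
  refine ⟨10 * C₀^2, by positivity, ?_⟩
  intro lam lam0 lam1 κ u s lamA D hΛ h0 h1 hdet hop hκ0 hκ1 hkl hang hlamA heq
  have hπ := Real.pi_pos
  have hπ4 : π < 3.15 := Real.pi_lt_d2
  have hC0pos : (0:ℝ) < C₀ := by linarith
  have hlam10 : 10 * C₀^2 ≤ lam := hΛ
  have hC0sq : (1:ℝ) ≤ C₀^2 := by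
    calc (1:ℝ) = 1*1 := by ring
      _ ≤ C₀*C₀ := mul_le_mul hC0 hC0 zero_le_one (by linarith)
      _ = C₀^2 := by ring
  have hlam1 : (1:ℝ) ≤ lam := by linarith
  have hlam0 : (0:ℝ) < lam := by linarith
  have ha0 : (0:ℝ) < lam0 := by linarith
  have hb0 : (0:ℝ) < lam1 := by linarith
  have hA0 : (0:ℝ) < lamA := by linarith
  -- entries
  have e00 : (Rot u * Dg lamA * Rot (π/2 - s)) 0 0 = (Dg lam1 * D * Dg lam0) 0 0 := by rw [heq]
  have e01 : (Rot u * Dg lamA * Rot (π/2 - s)) 0 1 = (Dg lam1 * D * Dg lam0) 0 1 := by rw [heq]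
  have e10 : (Rot u * Dg lamA * Rot (π/2 - s)) 1 0 = (Dg lam1 * D * Dg lam0) 1 0 := by rw [heq]
  have e11 : (Rot u * Dg lamA * Rot (π/2 - s)) 1 1 = (Dg lam1 * D * Dg lam0) 1 1 := by rw [heq]
  simp only [Rot, Dg, Matrix.mul_apply, Matrix.vecMul, dotProduct, Fin.sum_univ_two,
    Real.cos_pi_div_two_sub, Real.sin_pi_div_two_sub, Matrix.cons_val', Matrix.cons_val_zero,
    Matrix.cons_val_one, Matrix.head_cons, Matrix.empty_val', Matrix.cons_val_fin_one,
    Matrix.head_fin_const, Matrix.of_apply, Matrix.cons_val_zero, zero_mul, mul_zero,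
    add_zero, zero_add] at e00 e01 e10 e11
  obtain ⟨hc1, hc2⟩ := col_bound D C₀ hop
  rw [Matrix.det_fin_two] at hdet
  have hmv : D.mulVec ![1, 0] = ![D 0 0, D 1 0] := by
    funext i
    fin_cases i <;>
      simp [Matrix.mulVec, dotProduct, Fin.sum_univ_two]
  rw [hmv] at hang
  set d00 := D 0 0 with hd00d
  set d01 := D 0 1 with hd01d
  set d10 := D 1 0 with hd10d
  set d11 := D 1 1 with hd11d
  -- the three key identities
  have pu := Real.sin_sq_add_cos_sq u
  have ps := Real.sin_sq_add_cos_sq s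
  have f00 := congrArg (fun t => t^2) e00
  have f01 := congrArg (fun t => t^2) e01
  have f10 := congrArg (fun t => t^2) e10
  have f11 := congrArg (fun t => t^2) e11
  have hS : (lamA^2 - (lamA⁻¹)^2) * (Real.cos s)^2
      = (lam1*d01*lam0⁻¹)^2 + (lam1⁻¹*d11*lam0⁻¹)^2 - (lamA⁻¹)^2 := by
    linear_combination f01 + f11 - (lamA^2*(Real.cos s)^2 + (lamA⁻¹)^2*(Real.sin s)^2)*pu
      - (lamA⁻¹)^2*ps
  have hU : (lamA^2 - (lamA⁻¹)^2) * (Real.sin u)^2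
      = (lam1⁻¹*d10*lam0)^2 + (lam1⁻¹*d11*lam0⁻¹)^2 - (lamA⁻¹)^2 := by
    linear_combination f10 + f11 - (lamA^2*(Real.sin u)^2 + (lamA⁻¹)^2*(Real.cos u)^2)*ps
      - (lamA⁻¹)^2*pu
  have hF : lamA^2 + (lamA⁻¹)^2
      = (lam1*d00*lam0)^2 + (lam1*d01*lam0⁻¹)^2 + (lam1⁻¹*d10*lam0)^2 + (lam1⁻¹*d11*lam0⁻¹)^2 := by
    linear_combination f00+f01+f10+f11
      - (lamA^2+(lamA⁻¹)^2)*(((Real.sin s)^2+(Real.cos s)^2)*pu + ps)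
  -- entry bounds from opNorm
  have hn1nn : (0:ℝ) ≤ Real.sqrt (d00^2 + d10^2) := Real.sqrt_nonneg _
  have hn2nn : (0:ℝ) ≤ Real.sqrt (d01^2 + d11^2) := Real.sqrt_nonneg _
  have hsq1 : Real.sqrt (d00^2 + d10^2) ^ 2 = d00^2 + d10^2 := Real.sq_sqrt (by positivity)
  have hsq2 : Real.sqrt (d01^2 + d11^2) ^ 2 = d01^2 + d11^2 := Real.sq_sqrt (by positivity)
  have hb1 : d00^2 + d10^2 ≤ C₀^2 := by
    rw [← hsq1]; exact pow_le_pow_left₀ hn1nn hc1 2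
  have hb2 : d01^2 + d11^2 ≤ C₀^2 := by
    rw [← hsq2]; exact pow_le_pow_left₀ hn2nn hc2 2
  -- det lower bound on first column
  have h1sq : 1 ≤ (d00^2+d10^2)*C₀^2 := det_one_col d00 d01 d10 d11 C₀ hdet hb2 (by positivity)
  have hn1pos : 0 < Real.sqrt (d00^2 + d10^2) := by
    rcases eq_or_lt_of_le hn1nn with h | h
    · exfalso
      have h0' : d00^2 + d10^2 = 0 := by rw [← hsq1, ← h]; ring
      rw [h0', zero_mul] at h1sq
      linarith
    · exact h
  have hn1lb : 1 ≤ C₀ * Real.sqrt (d00^2+d10^2) := by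
    apply one_le_of_sq _ (by positivity)
    calc (1:ℝ) ≤ (d00^2+d10^2)*C₀^2 := h1sq
      _ = (C₀ * Real.sqrt (d00^2+d10^2))^2 := by rw [mul_pow, hsq1]; ring
  have hzne : d00^2 + d10^2 ≠ 0 := by
    have h0' : 0 < d00^2 + d10^2 := by rw [← hsq1]; exact pow_pos hn1pos 2
    exact h0'.ne'
  have hd00ab := angle_lower d00 d10 κ hzne hang
  have hd00lb : 2*κ/(π*C₀) ≤ |d00| := by
    have h5 : (2/π) * κ * (C₀)⁻¹ ≤ (2/π) * κ * Real.sqrt (d00^2+d10^2) := by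
      apply mul_le_mul_of_nonneg_left _ (by positivity)
      rw [inv_le_iff_one_le_mul₀ hC0pos]
      linarith [hn1lb]
    calc 2*κ/(π*C₀) = (2/π) * κ * (C₀)⁻¹ := by ring
      _ ≤ |d00| := h5.trans hd00ab
  -- κ^4 lam ≥ 1
  have hk4lam : 1 ≤ κ^4 * lam := by
    have hκ4 : lam⁻¹ < κ^4 := by
      have hr : (lam ^ (-(1/4:ℝ)))^(4:ℕ) = lam⁻¹ := by
        rw [← Real.rpow_natCast (lam ^ (-(1/4:ℝ))) 4, ← Real.rpow_mul hlam0.le]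
        norm_num [Real.rpow_neg_one]
      calc lam⁻¹ = (lam ^ (-(1/4:ℝ)))^(4:ℕ) := hr.symm
        _ < κ^4 := by
          apply pow_lt_pow_left₀ hkl (Real.rpow_nonneg hlam0.le _)
          norm_num
    have h := mul_lt_mul_of_pos_right hκ4 hlam0
    rw [inv_mul_cancel₀ hlam0.ne'] at h
    linarith
  clear f00 f01 f10 f11 e00 e01 e10 e11 heq hop hang pu ps hmv hdet hΛ hkl hc1 hc2 h1sq
    hd00ab hzne hn1pos hn1lb hn1nn hn2nn hsq1 hsq2
  -- lam^3 ≤ κ^2 lam^4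
  have hκ2lam : lam^3 ≤ κ^2*lam^4 := by
    have h7 : 1 ≤ κ^4 * lam := hk4lam
    have hκ24 : κ^4 ≤ κ^2 := pow_le_pow_of_le_one hκ0.le hκ1.le (by norm_num)
    have m1 : κ^4*lam^4 ≤ κ^2*lam^4 := mul_le_mul_of_nonneg_right hκ24 (by positivity)
    have m2 : lam^3 ≤ κ^4*lam^4 := by
      have h := mul_le_mul_of_nonneg_right h7 (by positivity : (0:ℝ) ≤ lam^3)
      calc lam^3 = 1*lam^3 := by ring
        _ ≤ κ^4*lam*lam^3 := h
        _ = κ^4*lam^4 := by ring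
    linarith
  -- |d00| lower bound
  have hd00sq : 4*κ^2/(π^2*C₀^2) ≤ d00^2 := by
    have h6 : (2*κ/(π*C₀))^2 ≤ |d00|^2 := pow_le_pow_left₀ (by positivity) hd00lb 2
    rw [sq_abs] at h6
    calc 4*κ^2/(π^2*C₀^2) = (2*κ/(π*C₀))^2 := by ring
      _ ≤ d00^2 := h6
  -- X notation
  set X00 := lam1*d00*lam0 with hX00d
  set X01 := lam1*d01*lam0⁻¹ with hX01d
  set X10 := lam1⁻¹*d10*lam0 with hX10d
  set X11 := lam1⁻¹*d11*lam0⁻¹ with hX11d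
  have hG : 4*κ^2*lam0^2*lam1^2 ≤ π^2*C₀^2*X00^2 := by
    have hXe : X00^2 = lam1^2*lam0^2*d00^2 := by rw [hX00d]; ring
    rw [hXe]
    have h8 := mul_le_mul_of_nonneg_left hd00sq
      (by positivity : (0:ℝ) ≤ π^2*C₀^2*(lam1^2*lam0^2))
    calc 4*κ^2*lam0^2*lam1^2
        = π^2*C₀^2*(lam1^2*lam0^2) * (4*κ^2/(π^2*C₀^2)) := by
          field_simp
      _ ≤ π^2*C₀^2*(lam1^2*lam0^2) * d00^2 := h8
      _ = π^2*C₀^2*(lam1^2*lam0^2*d00^2) := by ring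
  -- X00^2 ≥ 4
  have hπsq : π^2 ≤ 10 := pisq_le
  have hc3 : π^2*C₀^2 ≤ lam := by
    have : π^2*C₀^2 ≤ 10*C₀^2 := mul_le_mul_of_nonneg_right hπsq (by positivity)
    linarith
  have hX4 : 4 ≤ X00^2 := by
    have o1 : lam^2 ≤ lam0^2 := pow_le_pow_left₀ hlam0.le h0 2
    have o2 : lam^2 ≤ lam1^2 := pow_le_pow_left₀ hlam0.le h1 2
    have o3 : lam^2*lam^2 ≤ lam0^2*lam1^2 :=
      mul_le_mul o1 o2 (by positivity) (by positivity)
    have o4 : 4*κ^2*(lam^2*lam^2) ≤ 4*κ^2*(lam0^2*lam1^2) :=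
      mul_le_mul_of_nonneg_left o3 (by positivity)
    have h9 : 4*lam^3 ≤ π^2*C₀^2*X00^2 := by linarith [hκ2lam, hG, o4]
    have o5 : lam ≤ lam^3 := le_self_pow₀ hlam1 (by norm_num)
    have o6 : π^2*C₀^2*4 ≤ π^2*C₀^2*X00^2 := by linarith [hc3, o5, h9]
    have hpos : (0:ℝ) < π^2*C₀^2 := by positivity
    exact le_of_mul_le_mul_left o6 hpos
  -- gap bounds
  set μ := lamA⁻¹ with hμd
  have hμ1 : μ ≤ 1 := by
    rw [hμd, inv_le_one_iff₀]; right; linarith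
  have hμ0 : 0 < μ := by rw [hμd]; positivity
  have hμsq : μ^2 ≤ 1 := pow_le_one₀ hμ0.le hμ1
  have hgap1 : X00^2 - 2 ≤ lamA^2 - μ^2 := by
    linarith [hF, sq_nonneg X01, sq_nonneg X10, sq_nonneg X11, hμsq]
  have hgap2 : X00^2/2 ≤ lamA^2 - μ^2 := by linarith [hgap1, hX4]
  have hgapmain : 2*κ^2*lam0^2*lam1^2 ≤ π^2*C₀^2*(lamA^2 - μ^2) := by
    have h := mul_le_mul_of_nonneg_left hgap2 (by positivity : (0:ℝ) ≤ π^2*C₀^2)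
    linarith [hG, h]
  -- bounds on X01², X10², X11²
  have hX01b : X01^2 ≤ C₀^2*lam1^2*(lam0⁻¹)^2 := by
    have h := mul_le_mul_of_nonneg_left
      (show d01^2 ≤ C₀^2 by linarith [hb2, sq_nonneg d11])
      (by positivity : (0:ℝ) ≤ lam1^2*(lam0⁻¹)^2)
    calc X01^2 = lam1^2*(lam0⁻¹)^2*d01^2 := by rw [hX01d]; ring
      _ ≤ lam1^2*(lam0⁻¹)^2*C₀^2 := h
      _ = C₀^2*lam1^2*(lam0⁻¹)^2 := by ring
  have hX10b : X10^2 ≤ C₀^2*lam0^2*(lam1⁻¹)^2 := by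
    have h := mul_le_mul_of_nonneg_left
      (show d10^2 ≤ C₀^2 by linarith [hb1, sq_nonneg d00])
      (by positivity : (0:ℝ) ≤ lam0^2*(lam1⁻¹)^2)
    calc X10^2 = lam0^2*(lam1⁻¹)^2*d10^2 := by rw [hX10d]; ring
      _ ≤ lam0^2*(lam1⁻¹)^2*C₀^2 := h
      _ = C₀^2*lam0^2*(lam1⁻¹)^2 := by ring
  have hX11b : X11^2 ≤ C₀^2*(lam1⁻¹)^2*(lam0⁻¹)^2 := by
    have h := mul_le_mul_of_nonneg_left
      (show d11^2 ≤ C₀^2 by linarith [hb2, sq_nonneg d01])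
      (by positivity : (0:ℝ) ≤ (lam1⁻¹)^2*(lam0⁻¹)^2)
    calc X11^2 = (lam1⁻¹)^2*(lam0⁻¹)^2*d11^2 := by rw [hX11d]; ring
      _ ≤ (lam1⁻¹)^2*(lam0⁻¹)^2*C₀^2 := h
      _ = C₀^2*(lam1⁻¹)^2*(lam0⁻¹)^2 := by ring
  -- apply core bound
  have hcore_s : (Real.cos s)^2*(κ^2*lam^4) ≤ π^2*C₀^4 := by
    apply core_bound C₀ κ lam lam0 lam1 (lamA^2 - μ^2) (Real.cos s) hC0 hκ0 hlam1 h0 h1 hgapmain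
    calc (lamA^2 - μ^2) * (Real.cos s)^2 = X01^2 + X11^2 - μ^2 := by rw [← hS, hμd]
      _ ≤ C₀^2*lam1^2*(lam0⁻¹)^2 + C₀^2*(lam1⁻¹)^2*(lam0⁻¹)^2 := by
          linarith [hX01b, hX11b, sq_nonneg μ]
  have hcore_u : (Real.sin u)^2*(κ^2*lam^4) ≤ π^2*C₀^4 := by
    have hgapmain2 : 2*κ^2*lam1^2*lam0^2 ≤ π^2*C₀^2*(lamA^2 - μ^2) := by linarith [hgapmain]
    apply core_bound C₀ κ lam lam1 lam0 (lamA^2 - μ^2) (Real.sin u) hC0 hκ0 hlam1 h1 h0 hgapmain2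
    calc (lamA^2 - μ^2) * (Real.sin u)^2 = X10^2 + X11^2 - μ^2 := by rw [← hU, hμd]
      _ ≤ C₀^2*lam0^2*(lam1⁻¹)^2 + C₀^2*(lam0⁻¹)^2*(lam1⁻¹)^2 := by
          linarith [hX10b, hX11b, sq_nonneg μ]
  constructor
  · exact final_step C₀ κ lam (Real.cos s) (π/2 - s) hC0 hκ0 hκ1 hlam1
      (by rw [Real.sin_pi_div_two_sub]) hcore_s
  · exact final_step C₀ κ lam (Real.sin u) u hC0 hκ0 hκ1 hlam1 rfl hcore_u
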